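/- Applying the multiplicative functional ε : Z → ℂ with ε(z) = ε(z*) = 1 to the linearization formula yields Σ_{l'',m''} a(l,m; l',m'; l'',m'') = 1 for every (l,m), (l',m'); combined with non-negativity, each δ_{(l,m)} ⋆ δ_{(l',m')} defined by these coefficients is a probability measure on ℤ≥0². -/

import Mathlib

noncomputable section

open scoped BigOperators

/-- The `q`-shifted factorial `(a;q)_k`. -/
def qPoch (a q : ℝ) (k : ℕ) : ℝ := ∏ j ∈ Finset.range k, (1 - a * q ^ j)

inductive ZGen | z | zs

/-- The single defining relation `z* z = q² z z* + (1 - q²)`. -/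
inductive ZRel (q : ℝ) : FreeAlgebra ℂ ZGen → FreeAlgebra ℂ ZGen → Prop
  | rel : ZRel q (FreeAlgebra.ι ℂ ZGen.zs * FreeAlgebra.ι ℂ ZGen.z)
      (((q : ℂ) ^ 2) • (FreeAlgebra.ι ℂ ZGen.z * FreeAlgebra.ι ℂ ZGen.zs) +
        ((1 : ℂ) - (q : ℂ) ^ 2) • 1)

/-- The universal complex unital algebra with generators `z`, `z*` and the relation
`z* z = q² z z* + (1 - q²)`. -/
abbrev ZAlg (q : ℝ) := RingQuot (ZRel q)

def zZ (q : ℝ) : ZAlg q := RingQuot.mkAlgHom ℂ (ZRel q) (FreeAlgebra.ι ℂ ZGen.z)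
def zsZ (q : ℝ) : ZAlg q := RingQuot.mkAlgHom ℂ (ZRel q) (FreeAlgebra.ι ℂ ZGen.zs)
/-- The coefficient of `x^k` in the little `q`-Jacobi polynomial
`P_m^{(α,β)}(x;qb) = p_m(x; qb^α, qb^β; qb)`. -/
def lqJacobiCoef (qb α β : ℝ) (m k : ℕ) : ℝ :=
  qPoch (qb ^ (-(m : ℤ))) qb k * qPoch (qb ^ (α + β + m + 1 : ℝ)) qb k /
    (qPoch (qb ^ (α + 1 : ℝ)) qb k * qPoch qb qb k) * qb ^ k

/-- The little `q`-Jacobi polynomial `P_m^{(α,β)}(·;qb)` evaluated at an algebra element. -/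
def lqJacobiEval {A : Type} [Ring A] [Algebra ℂ A] (qb α β : ℝ) (m : ℕ) (x : A) : A :=
  ∑ k ∈ Finset.range (m + 1), (lqJacobiCoef qb α β m k : ℂ) • x ^ k

/-- The `q`-disk polynomial `R^{(α)}_{l,m}(z, z*; qb)`:
`z^{l-m} P_m^{(α,l-m)}(1 - z z*; qb)` for `l ≥ m`, and
`P_l^{(α,m-l)}(1 - z z*; qb) (z*)^{m-l}` for `l ≤ m`. -/
def Rdisk (q qb α : ℝ) (l m : ℕ) : ZAlg q :=
  if m ≤ l then
    zZ q ^ (l - m) * lqJacobiEval qb α ((l : ℝ) - m) m (1 - zZ q * zsZ q)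
  else
    lqJacobiEval qb α ((m : ℝ) - l) l (1 - zZ q * zsZ q) * zsZ q ^ (m - l)

lemma lqJacobiCoef_zero (qb α β : ℝ) (m : ℕ) : lqJacobiCoef qb α β m 0 = 1 := by
  simp [lqJacobiCoef, qPoch]

lemma eps_lqJacobiEval (q qb α β : ℝ) (n : ℕ) (ε : ZAlg q →ₐ[ℂ] ℂ)
    (x : ZAlg q) (hx : ε x = 0) : ε (lqJacobiEval qb α β n x) = 1 := by
  unfold lqJacobiEval
  rw [map_sum]
  rw [Finset.sum_eq_single 0]
  · simp [lqJacobiCoef_zero, hx]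
  · intro k _ hk
    simp [hx, zero_pow hk]
  · simp


lemma eps_Rdisk (q qb α : ℝ) (l m : ℕ) (ε : ZAlg q →ₐ[ℂ] ℂ)
    (hεz : ε (zZ q) = 1) (hεzs : ε (zsZ q) = 1) :
    ε (Rdisk q qb α l m) = 1 := by
  have hx : ε (1 - zZ q * zsZ q) = 0 := by
    simp [map_sub, map_mul, hεz, hεzs]
  unfold Rdisk
  split <;>
    simp [map_mul, map_pow, hεz, hεzs, eps_lqJacobiEval _ _ _ _ _ _ _ hx]

lemma eps_sigma (q : ℝ) (σ : ZAlg q →ₛₗ[starRingEnd ℂ] ZAlg q)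
    (hσmul : ∀ x y, σ (x * y) = σ y * σ x)
    (hσz : σ (zZ q) = zsZ q) (hσzs : σ (zsZ q) = zZ q) (hσ1 : σ 1 = 1)
    (ε : ZAlg q →ₐ[ℂ] ℂ) (hεz : ε (zZ q) = 1) (hεzs : ε (zsZ q) = 1)
    (x : ZAlg q) : ε (σ x) = starRingEnd ℂ (ε x) := by
  obtain ⟨y, rfl⟩ := RingQuot.mkAlgHom_surjective ℂ (ZRel q) x
  induction y using FreeAlgebra.induction with
  | grade0 c =>
      rw [AlgHom.commutes, Algebra.algebraMap_eq_smul_one, map_smulₛₗ, hσ1]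
      simp
  | grade1 g =>
      cases g with
      | z => show ε (σ (zZ q)) = _; rw [hσz, hεzs]; show _ = starRingEnd ℂ (ε (zZ q)); rw [hεz]; simp
      | zs => show ε (σ (zsZ q)) = _; rw [hσzs, hεz]; show _ = starRingEnd ℂ (ε (zsZ q)); rw [hεzs]; simp
  | mul a c iha ihc =>
      rw [map_mul, hσmul, map_mul, iha, ihc, map_mul, map_mul, mul_comm]
  | add a c iha ihc =>
      rw [map_add, map_add, map_add, iha, ihc, map_add]
      exact (map_add _ _ _).symm

/-- Applying the multiplicative functional `ε : Z → ℂ` with `ε(z) = ε(z*) = 1` to the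
linearization formula yields `Σ_{l'',m''} a(l,m;l',m';l'',m'') = 1`. -/
theorem stmt16 (q α : ℝ) (hq0 : 0 < q) (hq1 : q < 1) (hα : 0 < α)
    (σ : ZAlg q →ₛₗ[starRingEnd ℂ] ZAlg q)
    (hσmul : ∀ x y, σ (x * y) = σ y * σ x)
    (hσz : σ (zZ q) = zsZ q) (hσzs : σ (zsZ q) = zZ q) (hσ1 : σ 1 = 1)
    (b : Module.Basis (ℕ × ℕ) ℂ (ZAlg q))
    (hb : ∀ l m : ℕ, b (l, m) = Rdisk q (q ^ 2) α l m)
    (ε : ZAlg q →ₐ[ℂ] ℂ) (hεz : ε (zZ q) = 1) (hεzs : ε (zsZ q) = 1)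
    (l m l' m' : ℕ) :
    (b.repr (Rdisk q (q ^ 2) α l m * σ (Rdisk q (q ^ 2) α l' m'))).sum
        (fun _ a => a) = 1 := by
  set x := Rdisk q (q ^ 2) α l m * σ (Rdisk q (q ^ 2) α l' m') with hx
  have hεx : ε x = 1 := by
    rw [map_mul, eps_Rdisk q (q^2) α l m ε hεz hεzs,
      eps_sigma q σ hσmul hσz hσzs hσ1 ε hεz hεzs, eps_Rdisk, one_mul]
    · simp
    · exact hεz
    · exact hεzs
  have htot : ((b.repr x).sum fun i a => a • b i) = x := b.linearCombination_repr x
  calc (b.repr x).sum (fun _ a => a)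
      = (b.repr x).sum (fun i a => a * ε (b i)) := by
        apply Finsupp.sum_congr
        intro i _
        obtain ⟨li, mi⟩ := i
        rw [hb, eps_Rdisk q (q^2) α li mi ε hεz hεzs, mul_one]
    _ = ε ((b.repr x).sum fun i a => a • b i) := by
        rw [map_finsuppSum]
        exact Finsupp.sum_congr fun i _ => by rw [map_smul, smul_eq_mul]
    _ = 1 := by rw [htot, hεx]
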